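/- Let Q denote the Gaussian tail function Q(x) = ∫_x^∞ (1/√(2π)) e^{-t²/2} dt. Fix K ∈ ℕ, M > 0, σ > 0, and for each k = 0, …, K−1 let r_k ≥ 0, g_k ≥ 0, c_k ≥ 0, P_f^{(k)}(γ) = Q((γ - M σ²)/(σ² √(2M))), and P_m^{(k)}(γ) = 1 - Q((γ - M(σ² + g_k))/(σ √(2M(σ² + 2g_k)))). Let D ⊆ ℝ^K be the feasible set of problem (P2): D = {γ : Σ_{i ∈ S_j} c_i P_m^{(i)}(γ_i) ≤ ε_j for all j = 0, …, J−1, and γ_min,k ≤ γ_k ≤ γ_max,k for all k}, where M σ² ≤ γ_min,k ≤ γ_max,k ≤ M(σ² + g_k) for every k. Then every local minimizer of the objective F(γ) = Σ_{k=0}^{K−1} r_k P_f^{(k)}(γ_k) over D is a global minimizer of F over D. -/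

import Mathlib

/-- The Gaussian tail function `Q(x) = ∫_x^∞ (1/√(2π)) e^{-t²/2} dt`. -/
noncomputable def gaussQ (x : ℝ) : ℝ :=
  ∫ t in Set.Ioi x, (Real.sqrt (2 * Real.pi))⁻¹ * Real.exp (-t ^ 2 / 2)

section aux

open MeasureTheory Set

/-- The standard normal density. -/
noncomputable def gaussPdf (t : ℝ) : ℝ :=
  (Real.sqrt (2 * Real.pi))⁻¹ * Real.exp (-t ^ 2 / 2)

lemma gaussPdf_cont : Continuous gaussPdf := by
  unfold gaussPdf
  fun_prop

lemma gaussPdf_integrable : Integrable gaussPdf := by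
  have h : Integrable fun t : ℝ => Real.exp (-(1/2) * t ^ 2) :=
    integrable_exp_neg_mul_sq (by norm_num)
  have : Integrable fun t : ℝ => (Real.sqrt (2 * Real.pi))⁻¹ * Real.exp (-(1/2) * t ^ 2) :=
    h.const_mul _
  refine this.congr ?_
  filter_upwards with t
  unfold gaussPdf
  ring_nf

lemma gaussQ_eq (x : ℝ) : gaussQ x = gaussQ 0 - ∫ t in (0:ℝ)..x, gaussPdf t := by
  have h0 : IntegrableOn gaussPdf (Iic (0:ℝ)) := gaussPdf_integrable.integrableOn
  have hx : IntegrableOn gaussPdf (Iic x) := gaussPdf_integrable.integrableOn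
  have key : ∀ a : ℝ, gaussQ a = (∫ t : ℝ, gaussPdf t) - ∫ t in Iic a, gaussPdf t := by
    intro a
    have := intervalIntegral.integral_Iic_add_Ioi (b := a) (f := gaussPdf) (μ := volume)
      gaussPdf_integrable.integrableOn gaussPdf_integrable.integrableOn
    have hQ : gaussQ a = ∫ t in Ioi a, gaussPdf t := rfl
    linarith [this]
  rw [key x, key 0, ← intervalIntegral.integral_Iic_sub_Iic h0 hx]
  ring

lemma gaussQ_hasDerivAt (x : ℝ) : HasDerivAt gaussQ (-gaussPdf x) x := by
  have h : HasDerivAt (fun u => ∫ t in (0:ℝ)..u, gaussPdf t) (gaussPdf x) x :=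
    intervalIntegral.integral_hasDerivAt_right
      gaussPdf_integrable.intervalIntegrable
      (gaussPdf_cont.stronglyMeasurableAtFilter _ _)
      gaussPdf_cont.continuousAt
  have h2 : HasDerivAt (fun u => gaussQ 0 - ∫ t in (0:ℝ)..u, gaussPdf t) (-gaussPdf x) x :=
    h.const_sub _
  refine h2.congr_of_eventuallyEq ?_
  filter_upwards with u
  exact gaussQ_eq u

lemma gaussQ_deriv : deriv gaussQ = fun x => -gaussPdf x := by
  funext x; exact (gaussQ_hasDerivAt x).deriv

lemma gaussPdf_nonneg (x : ℝ) : 0 ≤ gaussPdf x := by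
  unfold gaussPdf
  positivity

lemma gaussPdf_anti_of_sq (a b : ℝ) (h : a ^ 2 ≤ b ^ 2) : gaussPdf b ≤ gaussPdf a := by
  unfold gaussPdf
  have : Real.exp (-b ^ 2 / 2) ≤ Real.exp (-a ^ 2 / 2) := Real.exp_le_exp.2 (by linarith)
  have h0 : (0:ℝ) ≤ (Real.sqrt (2 * Real.pi))⁻¹ := by positivity
  exact mul_le_mul_of_nonneg_left this h0

/-- `gaussQ` is convex on `[0, ∞)`. -/
lemma gaussQ_convexOn : ConvexOn ℝ (Ici (0:ℝ)) gaussQ := by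
  refine MonotoneOn.convexOn_of_deriv (convex_Ici 0)
    (fun x _ => (gaussQ_hasDerivAt x).continuousAt.continuousWithinAt)
    (fun x _ => (gaussQ_hasDerivAt x).differentiableAt.differentiableWithinAt) ?_
  rw [gaussQ_deriv, interior_Ici]
  intro a ha b hb hab
  simp only [neg_le_neg_iff]
  refine gaussPdf_anti_of_sq a b ?_
  have ha' : (0:ℝ) ≤ a := le_of_lt ha
  nlinarith

/-- `1 - gaussQ` (the Gaussian CDF) is convex on `(-∞, 0]`. -/
lemma one_sub_gaussQ_convexOn : ConvexOn ℝ (Iic (0:ℝ)) (fun x => 1 - gaussQ x) := by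
  refine MonotoneOn.convexOn_of_deriv (convex_Iic 0)
    (fun x _ => (((gaussQ_hasDerivAt x).const_sub 1).continuousAt).continuousWithinAt)
    (fun x _ => (((gaussQ_hasDerivAt x).const_sub 1).differentiableAt).differentiableWithinAt) ?_
  rw [interior_Iic]
  have hderiv : ∀ x : ℝ, deriv (fun x => 1 - gaussQ x) x = gaussPdf x := by
    intro x
    have : HasDerivAt (fun x => 1 - gaussQ x) (-(-gaussPdf x)) x :=
      (gaussQ_hasDerivAt x).const_sub 1
    simpa using this.deriv
  intro a ha b hb hab
  rw [hderiv a, hderiv b]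
  refine gaussPdf_anti_of_sq b a ?_
  have hb' : b ≤ 0 := le_of_lt hb
  nlinarith

/-- Convexity of a composition of a convex function with a coordinate affine map. -/
lemma convexOn_comp_affine_coord {K : ℕ} {s : Set ℝ} {φ : ℝ → ℝ} (hφ : ConvexOn ℝ s φ)
    {B : Set (Fin K → ℝ)} (hB : Convex ℝ B) (i : Fin K) (m d : ℝ)
    (hmap : ∀ γ ∈ B, (γ i - m) / d ∈ s) :
    ConvexOn ℝ B (fun γ => φ ((γ i - m) / d)) := by
  refine ⟨hB, fun x hx y hy a b ha hb hab => ?_⟩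
  have key : ((a • x + b • y) i - m) / d
      = a * ((x i - m) / d) + b * ((y i - m) / d) := by
    have h1 : (a • x + b • y) i - m = a * (x i - m) + b * (y i - m) := by
      simp only [Pi.add_apply, Pi.smul_apply, smul_eq_mul]
      linear_combination m * hab
    rw [h1, add_div, mul_div_assoc, mul_div_assoc]
  show φ (((a • x + b • y) i - m) / d) ≤ a • φ ((x i - m) / d) + b • φ ((y i - m) / d)
  rw [key]
  exact hφ.2 (hmap x hx) (hmap y hy) ha hb hab

lemma convexOn_finset_sum {K : ℕ} {B : Set (Fin K → ℝ)} (hB : Convex ℝ B)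
    {ι : Type*} (t : Finset ι) (f : ι → (Fin K → ℝ) → ℝ)
    (hf : ∀ i ∈ t, ConvexOn ℝ B (f i)) :
    ConvexOn ℝ B (fun γ => ∑ i ∈ t, f i γ) := by
  classical
  induction t using Finset.induction_on with
  | empty => simpa using convexOn_const 0 hB
  | insert a t' hnt ih =>
    simp only [Finset.sum_insert hnt]
    exact (hf a (Finset.mem_insert_self a t')).add
      (ih fun i hi => hf i (Finset.mem_insert_of_mem hi))

end aux

/-- on the feasible set `D` of problem (P2), every local minimizer of the
objective `F(γ) = Σ_k r_k P_f^{(k)}(γ_k)` is a global minimizer of `F` over `D`. -/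
theorem P2_local_min_is_global (K J : ℕ) (M σ : ℝ) (hM : 0 < M) (hσ : 0 < σ)
    (r g c : Fin K → ℝ) (hr : ∀ k, 0 ≤ r k) (hg : ∀ k, 0 ≤ g k) (hc : ∀ k, 0 ≤ c k)
    (S : Fin J → Finset (Fin K)) (ε : Fin J → ℝ) (hε : ∀ j, 0 ≤ ε j)
    (γmin γmax : Fin K → ℝ)
    (hbounds : ∀ k, M * σ ^ 2 ≤ γmin k ∧ γmin k ≤ γmax k ∧
      γmax k ≤ M * (σ ^ 2 + g k))
    (D : Set (Fin K → ℝ))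
    (hD : D =
      {γ : Fin K → ℝ |
        (∀ j : Fin J,
          ∑ i ∈ S j,
            c i * (1 - gaussQ ((γ i - M * (σ ^ 2 + g i)) /
              (σ * Real.sqrt (2 * M * (σ ^ 2 + 2 * g i))))) ≤ ε j) ∧
        (∀ k : Fin K, γmin k ≤ γ k ∧ γ k ≤ γmax k)})
    (F : (Fin K → ℝ) → ℝ)
    (hF : ∀ γ, F γ =
      ∑ k : Fin K, r k * gaussQ ((γ k - M * σ ^ 2) / (σ ^ 2 * Real.sqrt (2 * M)))) :
    ∀ x ∈ D, IsLocalMinOn F D x → ∀ y ∈ D, F x ≤ F y := by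
  classical
  -- the box
  set B : Set (Fin K → ℝ) := {γ | ∀ k : Fin K, γmin k ≤ γ k ∧ γ k ≤ γmax k} with hB
  have hBconv : Convex ℝ B := by
    intro x hx y hy a b ha hb hab
    intro k
    have hxk := hx k
    have hyk := hy k
    constructor
    · have : a * γmin k + b * γmin k ≤ a * x k + b * y k := by
        have h1 : a * γmin k ≤ a * x k := mul_le_mul_of_nonneg_left hxk.1 ha
        have h2 : b * γmin k ≤ b * y k := mul_le_mul_of_nonneg_left hyk.1 hb
        linarith
      simpa [Pi.add_apply, Pi.smul_apply, smul_eq_mul, ← add_mul, hab] using this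
    · have : a * x k + b * y k ≤ a * γmax k + b * γmax k := by
        have h1 : a * x k ≤ a * γmax k := mul_le_mul_of_nonneg_left hxk.2 ha
        have h2 : b * y k ≤ b * γmax k := mul_le_mul_of_nonneg_left hyk.2 hb
        linarith
      simpa [Pi.add_apply, Pi.smul_apply, smul_eq_mul, ← add_mul, hab] using this
  -- each miss-probability constraint term is convex on B
  have hterm : ∀ i : Fin K, ConvexOn ℝ B (fun γ : Fin K → ℝ =>
      c i * (1 - gaussQ ((γ i - M * (σ ^ 2 + g i)) /
        (σ * Real.sqrt (2 * M * (σ ^ 2 + 2 * g i)))))) := by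
    intro i
    have hd : 0 < σ * Real.sqrt (2 * M * (σ ^ 2 + 2 * g i)) := by
      have h1 : 0 < σ ^ 2 + 2 * g i := by nlinarith [pow_pos hσ 2, hg i]
      have h2 : (0:ℝ) < 2 * M := by positivity
      exact mul_pos hσ (Real.sqrt_pos.2 (mul_pos h2 h1))
    have hmap : ∀ γ ∈ B, (γ i - M * (σ ^ 2 + g i)) /
        (σ * Real.sqrt (2 * M * (σ ^ 2 + 2 * g i))) ∈ Set.Iic (0:ℝ) := by
      intro γ hγ
      have h1 : γ i ≤ M * (σ ^ 2 + g i) := le_trans (hγ i).2 (hbounds i).2.2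
      exact div_nonpos_of_nonpos_of_nonneg (by linarith) hd.le
    have := (convexOn_comp_affine_coord one_sub_gaussQ_convexOn hBconv i
      (M * (σ ^ 2 + g i)) (σ * Real.sqrt (2 * M * (σ ^ 2 + 2 * g i))) hmap).smul (hc i)
    simpa [smul_eq_mul] using this
  -- each constraint function is convex on B
  have hconstr : ∀ j : Fin J, ConvexOn ℝ B (fun γ : Fin K → ℝ =>
      ∑ i ∈ S j, c i * (1 - gaussQ ((γ i - M * (σ ^ 2 + g i)) /
        (σ * Real.sqrt (2 * M * (σ ^ 2 + 2 * g i)))))) := by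
    intro j
    exact convexOn_finset_sum hBconv (S j) _ fun i _ => hterm i
  -- D is convex
  have hDB : D ⊆ B := by
    intro γ hγ
    rw [hD] at hγ
    exact hγ.2
  have hDconv : Convex ℝ D := by
    intro x hx y hy a b ha hb hab
    rw [hD] at hx hy ⊢
    refine ⟨fun j => ?_, fun k => hBconv hx.2 hy.2 ha hb hab k⟩
    have h := (hconstr j).2 hx.2 hy.2 ha hb hab
    have h2 : a • (∑ i ∈ S j, c i * (1 - gaussQ ((x i - M * (σ ^ 2 + g i)) /
          (σ * Real.sqrt (2 * M * (σ ^ 2 + 2 * g i))))))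
        + b • (∑ i ∈ S j, c i * (1 - gaussQ ((y i - M * (σ ^ 2 + g i)) /
          (σ * Real.sqrt (2 * M * (σ ^ 2 + 2 * g i)))))) ≤ a * ε j + b * ε j := by
      have h1 := mul_le_mul_of_nonneg_left (hx.1 j) ha
      have h2 := mul_le_mul_of_nonneg_left (hy.1 j) hb
      simp only [smul_eq_mul]
      linarith
    have h3 : a * ε j + b * ε j = ε j := by linear_combination ε j * hab
    calc _ ≤ _ := h
      _ ≤ a * ε j + b * ε j := h2
      _ = ε j := h3
  -- F is convex on D
  have hFconv : ConvexOn ℝ D F := by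
    have hFε : F = fun γ : Fin K → ℝ =>
        ∑ k : Fin K, r k * gaussQ ((γ k - M * σ ^ 2) / (σ ^ 2 * Real.sqrt (2 * M))) :=
      funext hF
    rw [hFε]
    refine convexOn_finset_sum hDconv Finset.univ _ fun k _ => ?_
    have hd : 0 < σ ^ 2 * Real.sqrt (2 * M) := by positivity
    have hmap : ∀ γ ∈ D, (γ k - M * σ ^ 2) / (σ ^ 2 * Real.sqrt (2 * M)) ∈
        Set.Ici (0:ℝ) := by
      intro γ hγ
      have h1 : M * σ ^ 2 ≤ γ k := le_trans (hbounds k).1 ((hDB hγ) k).1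
      exact div_nonneg (by linarith) hd.le
    have := (convexOn_comp_affine_coord gaussQ_convexOn hDconv k
      (M * σ ^ 2) (σ ^ 2 * Real.sqrt (2 * M)) hmap).smul (hr k)
    simpa [smul_eq_mul] using this
  intro x hx hloc y hy
  exact IsMinOn.of_isLocalMinOn_of_convexOn hx hloc hFconv hy
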